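/- Let ‖·‖ be a norm on ℝ^{m×n} with dual norm ‖·‖_*, and let f : ℝ^{m×n} → ℝ be differentiable with gradients L-Lipschitz with respect to ‖·‖ (i.e. ‖∇f(X) − ∇f(Y)‖_* ≤ L‖X − Y‖). Let X ∈ ℝ^{m×n}, G = ∇f(X), D ∈ ℝ^{m×n} with ‖D‖ ≤ M for some M > 0, and set X' = X − α⟨G, D⟩D with α = η/(L·M²) for some η ∈ (0, 2). Then f(X') ≤ f(X) − (η(1 − η/2)/(L·M²))·⟨G, D⟩². -/

import Mathlib

open scoped Matrix

attribute [local instance] Matrix.normedAddCommGroup Matrix.normedSpace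

/-- The Frobenius (trace) inner product `⟨A, B⟩ = tr(AᵀB) = ∑ᵢⱼ Aᵢⱼ Bᵢⱼ`. -/
def frobInner {m n : ℕ} (A B : Matrix (Fin m) (Fin n) ℝ) : ℝ :=
  ∑ i, ∑ j, A i j * B i j

/-- The dual norm `‖V‖_* = sup {⟨U, V⟩ : N U ≤ 1}` of a norm `N` on `ℝ^{m×n}`. -/
noncomputable def dualNorm {m n : ℕ} (N : Matrix (Fin m) (Fin n) ℝ → ℝ)
    (V : Matrix (Fin m) (Fin n) ℝ) : ℝ :=
  sSup ((fun U => frobInner U V) '' {U | N U ≤ 1})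

section Aux

variable {m n : ℕ}

lemma frobInner_comm (A B : Matrix (Fin m) (Fin n) ℝ) : frobInner A B = frobInner B A := by
  simp only [frobInner, mul_comm]

lemma frobInner_smul_left (c : ℝ) (A B : Matrix (Fin m) (Fin n) ℝ) :
    frobInner (c • A) B = c * frobInner A B := by
  simp only [frobInner, Matrix.smul_apply, smul_eq_mul, Finset.mul_sum, mul_assoc]

lemma frobInner_sub_left (A B C : Matrix (Fin m) (Fin n) ℝ) :
    frobInner (A - B) C = frobInner A C - frobInner B C := by
  simp only [frobInner, Matrix.sub_apply, sub_mul, Finset.sum_sub_distrib]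

lemma frobInner_zero_left (B : Matrix (Fin m) (Fin n) ℝ) : frobInner 0 B = 0 := by
  simp [frobInner]

/-- A type synonym of matrices, to carry the abstract norm `N`. -/
def MatCopy (m n : ℕ) : Type := Matrix (Fin m) (Fin n) ℝ

lemma N_nonneg (N : Matrix (Fin m) (Fin n) ℝ → ℝ)
    (hN_add : ∀ A B, N (A + B) ≤ N A + N B)
    (hN_smul : ∀ (c : ℝ) A, N (c • A) = |c| * N A)
    (hN_def : ∀ A, N A = 0 ↔ A = 0) (A : Matrix (Fin m) (Fin n) ℝ) : 0 ≤ N A := by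
  have hneg : N (-A) = N A := by
    have := hN_smul (-1) A
    simpa using this
  have h0 : N 0 = 0 := (hN_def 0).2 rfl
  have := hN_add A (-A)
  rw [add_neg_cancel, h0, hneg] at this
  linarith

/-- Norm equivalence: the standard matrix norm is bounded by a constant times `N`. -/
lemma exists_norm_le_const_mul (N : Matrix (Fin m) (Fin n) ℝ → ℝ)
    (hN_add : ∀ A B, N (A + B) ≤ N A + N B)
    (hN_smul : ∀ (c : ℝ) A, N (c • A) = |c| * N A)
    (hN_def : ∀ A, N A = 0 ↔ A = 0) :
    ∃ C : ℝ, 0 ≤ C ∧ ∀ U : Matrix (Fin m) (Fin n) ℝ, ‖U‖ ≤ C * N U := by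
  let : AddCommGroup (MatCopy m n) :=
    inferInstanceAs (AddCommGroup (Matrix (Fin m) (Fin n) ℝ))
  let : NormedAddCommGroup (MatCopy m n) := AddGroupNorm.toNormedAddCommGroup
    { toFun := fun A => N A
      map_zero' := (hN_def 0).2 rfl
      add_le' := hN_add
      neg' := fun A => by
        have h := hN_smul (-1) A
        rw [abs_neg, abs_one, one_mul] at h
        rw [← h]
        congr 1
        exact (neg_one_smul ℝ (show Matrix (Fin m) (Fin n) ℝ from A)).symm
      eq_zero_of_map_eq_zero' := fun A h => (hN_def A).1 h }
  let : NormedSpace ℝ (MatCopy m n) :=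
    @NormedSpace.mk ℝ (MatCopy m n) _ _ (inferInstanceAs (Module ℝ (Matrix (Fin m) (Fin n) ℝ)))
      (fun c A => by
        rw [Real.norm_eq_abs]
        exact le_of_eq (hN_smul c A))
  let : FiniteDimensional ℝ (MatCopy m n) :=
    inferInstanceAs (FiniteDimensional ℝ (Matrix (Fin m) (Fin n) ℝ))
  let ℓ : MatCopy m n →ₗ[ℝ] (Fin m → Fin n → ℝ) :=
    { toFun := fun A => A
      map_add' := fun _ _ => rfl
      map_smul' := fun _ _ => rfl }
  let ℓc : MatCopy m n →L[ℝ] (Fin m → Fin n → ℝ) := LinearMap.toContinuousLinearMap ℓ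
  refine ⟨‖ℓc‖, norm_nonneg _, fun U => ?_⟩
  exact ℓc.le_opNorm U

/-- The duality bound `⟨H, W⟩ ≤ ‖W‖_* · N H`. -/
lemma frobInner_le_dualNorm_mul (N : Matrix (Fin m) (Fin n) ℝ → ℝ)
    (hN_add : ∀ A B, N (A + B) ≤ N A + N B)
    (hN_smul : ∀ (c : ℝ) A, N (c • A) = |c| * N A)
    (hN_def : ∀ A, N A = 0 ↔ A = 0)
    (W H : Matrix (Fin m) (Fin n) ℝ) :
    frobInner H W ≤ dualNorm N W * N H := by
  obtain ⟨C, hC0, hC⟩ := exists_norm_le_const_mul N hN_add hN_smul hN_def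
  have hNn := N_nonneg N hN_add hN_smul hN_def
  -- boundedness of the dual-ball image
  have hbdd : BddAbove ((fun U => frobInner U W) '' {U | N U ≤ 1}) := by
    refine ⟨C * ∑ i, ∑ j, |W i j|, ?_⟩
    rintro y ⟨U, hU, rfl⟩
    have hS : (0:ℝ) ≤ ∑ i, ∑ j, |W i j| := by positivity
    have h1 : frobInner U W ≤ ∑ i, ∑ j, |U i j| * |W i j| := by
      refine Finset.sum_le_sum fun i _ => Finset.sum_le_sum fun j _ => ?_
      calc U i j * W i j ≤ |U i j * W i j| := le_abs_self _
        _ = |U i j| * |W i j| := abs_mul _ _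
    have h2 : ∑ i, ∑ j, |U i j| * |W i j| ≤ ∑ i, ∑ j, ‖U‖ * |W i j| := by
      refine Finset.sum_le_sum fun i _ => Finset.sum_le_sum fun j _ => ?_
      exact mul_le_mul_of_nonneg_right (U.norm_entry_le_entrywise_sup_norm) (abs_nonneg _)
    have h3 : ∑ i, ∑ j, ‖U‖ * |W i j| = ‖U‖ * ∑ i, ∑ j, |W i j| := by
      simp [Finset.mul_sum]
    have h4 : ‖U‖ ≤ C := by
      calc ‖U‖ ≤ C * N U := hC U
        _ ≤ C * 1 := by exact mul_le_mul_of_nonneg_left hU hC0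
        _ = C := mul_one C
    calc frobInner U W ≤ ‖U‖ * ∑ i, ∑ j, |W i j| := by rw [← h3]; exact h1.trans h2
      _ ≤ C * ∑ i, ∑ j, |W i j| := mul_le_mul_of_nonneg_right h4 hS
  rcases eq_or_lt_of_le (hNn H) with h0 | hpos
  · -- N H = 0, so H = 0
    have hH : H = 0 := (hN_def H).1 h0.symm
    have hN0 : N H = 0 := h0.symm
    rw [hH] at hN0
    rw [hH, frobInner_zero_left, hN0, mul_zero]
  · have hne : N H ≠ 0 := ne_of_gt hpos
    set U : Matrix (Fin m) (Fin n) ℝ := (N H)⁻¹ • H with hUdef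
    have hUnorm : N U = 1 := by
      rw [hUdef, hN_smul, abs_of_pos (inv_pos.2 hpos), inv_mul_cancel₀ hne]
    have hmem : frobInner U W ∈ (fun U => frobInner U W) '' {U | N U ≤ 1} :=
      ⟨U, le_of_eq hUnorm, rfl⟩
    have hle : frobInner U W ≤ dualNorm N W := le_csSup hbdd hmem
    have hfrob : frobInner U W = (N H)⁻¹ * frobInner H W := by
      rw [hUdef, frobInner_smul_left]
    rw [hfrob] at hle
    have := mul_le_mul_of_nonneg_left hle (le_of_lt hpos)
    rw [← mul_assoc, mul_inv_cancel₀ hne, one_mul] at this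
    linarith [this]

/-- The descent lemma: `f(X+H) ≤ f(X) + ⟨∇f(X), H⟩ + L/2 (N H)²`. -/
lemma descent_lemma (N : Matrix (Fin m) (Fin n) ℝ → ℝ)
    (hN_add : ∀ A B, N (A + B) ≤ N A + N B)
    (hN_smul : ∀ (c : ℝ) A, N (c • A) = |c| * N A)
    (hN_def : ∀ A, N A = 0 ↔ A = 0)
    (f : Matrix (Fin m) (Fin n) ℝ → ℝ)
    (grad : Matrix (Fin m) (Fin n) ℝ → Matrix (Fin m) (Fin n) ℝ)
    (Df : Matrix (Fin m) (Fin n) ℝ → (Matrix (Fin m) (Fin n) ℝ →L[ℝ] ℝ))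
    (hDf : ∀ X, HasFDerivAt f (Df X) X)
    (hDf_grad : ∀ X H, Df X H = frobInner (grad X) H)
    (L : ℝ) (hL : 0 < L)
    (hLip : ∀ X Y, dualNorm N (grad X - grad Y) ≤ L * N (X - Y))
    (X H : Matrix (Fin m) (Fin n) ℝ) :
    f (X + H) ≤ f X + frobInner (grad X) H + L / 2 * (N H) ^ 2 := by
  have hNn := N_nonneg N hN_add hN_smul hN_def
  have hγ : ∀ t : ℝ, HasDerivAt (fun t : ℝ => X + t • H) H t := fun t => by
    have := ((hasDerivAt_id' t).smul_const H).const_add X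
    rwa [one_smul] at this
  have hfγ : ∀ t : ℝ, HasDerivAt (fun t : ℝ => f (X + t • H))
      (frobInner (grad (X + t • H)) H) t := fun t => by
    have := (hDf (X + t • H)).comp_hasDerivAt t (hγ t)
    exact this.congr_deriv (hDf_grad _ _)
  set φ : ℝ → ℝ := fun t =>
    f (X + t • H) - t * frobInner (grad X) H - L / 2 * t ^ 2 * (N H) ^ 2 with hφdef
  have hφ : ∀ t : ℝ, HasDerivAt φ
      (frobInner (grad (X + t • H)) H - frobInner (grad X) H - L * t * (N H) ^ 2) t := by
    intro t
    have h2 : HasDerivAt (fun t : ℝ => t * frobInner (grad X) H) (frobInner (grad X) H) t := by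
      simpa using (hasDerivAt_id t).mul_const (frobInner (grad X) H)
    have h3 : HasDerivAt (fun t : ℝ => L / 2 * t ^ 2 * (N H) ^ 2) (L * t * (N H) ^ 2) t := by
      have := ((hasDerivAt_pow 2 t).const_mul (L / 2)).mul_const ((N H) ^ 2)
      exact this.congr_deriv (by push_cast; ring)
    exact ((hfγ t).sub h2).sub h3
  have hanti : AntitoneOn φ (Set.Icc 0 1) := by
    refine antitoneOn_of_deriv_nonpos (convex_Icc (0:ℝ) 1)
      (Differentiable.continuous fun t => (hφ t).differentiableAt).continuousOn
      (fun x _ => (hφ x).differentiableAt.differentiableWithinAt) (fun t ht => ?_)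
    rw [interior_Icc] at ht
    rw [(hφ t).deriv]
    have hsub : frobInner (grad (X + t • H)) H - frobInner (grad X) H
        = frobInner (grad (X + t • H) - grad X) H := (frobInner_sub_left _ _ _).symm
    have h1 : frobInner (grad (X + t • H) - grad X) H
        ≤ dualNorm N (grad (X + t • H) - grad X) * N H := by
      have := frobInner_le_dualNorm_mul N hN_add hN_smul hN_def
        (grad (X + t • H) - grad X) H
      rw [frobInner_comm] at this
      exact this
    have h2 : dualNorm N (grad (X + t • H) - grad X) ≤ L * N (t • H) := by
      have := hLip (X + t • H) X
      simpa using this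
    have h3 : N (t • H) = t * N H := by
      rw [hN_smul, abs_of_pos ht.1]
    have h4 : dualNorm N (grad (X + t • H) - grad X) * N H ≤ L * t * (N H) ^ 2 := by
      calc dualNorm N (grad (X + t • H) - grad X) * N H
          ≤ (L * N (t • H)) * N H := mul_le_mul_of_nonneg_right h2 (hNn H)
        _ = L * t * (N H) ^ 2 := by rw [h3]; ring
    rw [hsub]
    linarith [h1.trans h4]
  have h01 : φ 1 ≤ φ 0 :=
    hanti (Set.left_mem_Icc.2 zero_le_one) (Set.right_mem_Icc.2 zero_le_one) zero_le_one
  have hφ0 : φ 0 = f X := by simp [hφdef]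
  have hφ1 : φ 1 = f (X + H) - frobInner (grad X) H - L / 2 * (N H) ^ 2 := by
    simp [hφdef]
  rw [hφ0, hφ1] at h01
  linarith

end Aux

/-- Per-step descent estimate: if `f` has `L`-Lipschitz gradients with respect
to the norm `N` (in the dual-norm sense), `G = ∇f(X)`, `N D ≤ M`, and
`X' = X − α ⟨G, D⟩ D` with `α = η/(L M²)`, `η ∈ (0,2)`, then
`f(X') ≤ f(X) − (η(1 − η/2)/(L M²)) ⟨G, D⟩²`. -/
theorem stmt3 {m n : ℕ} (N : Matrix (Fin m) (Fin n) ℝ → ℝ)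
    -- `N` is a norm:
    (hN_add : ∀ A B, N (A + B) ≤ N A + N B)
    (hN_smul : ∀ (c : ℝ) A, N (c • A) = |c| * N A)
    (hN_def : ∀ A, N A = 0 ↔ A = 0)
    (f : Matrix (Fin m) (Fin n) ℝ → ℝ)
    (grad : Matrix (Fin m) (Fin n) ℝ → Matrix (Fin m) (Fin n) ℝ)
    (Df : Matrix (Fin m) (Fin n) ℝ → (Matrix (Fin m) (Fin n) ℝ →L[ℝ] ℝ))
    -- `f` is differentiable with gradient `grad` (w.r.t. the Frobenius inner product):
    (hDf : ∀ X, HasFDerivAt f (Df X) X)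
    (hDf_grad : ∀ X H, Df X H = frobInner (grad X) H)
    (L : ℝ) (hL : 0 < L)
    -- gradients are `L`-Lipschitz with respect to `N`:
    (hLip : ∀ X Y, dualNorm N (grad X - grad Y) ≤ L * N (X - Y))
    (X D : Matrix (Fin m) (Fin n) ℝ) (M : ℝ) (hM : 0 < M) (hD : N D ≤ M)
    (η : ℝ) (hη : η ∈ Set.Ioo (0 : ℝ) 2) :
    f (X - (η / (L * M ^ 2) * frobInner (grad X) D) • D) ≤
      f X - η * (1 - η / 2) / (L * M ^ 2) * (frobInner (grad X) D) ^ 2 := by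
  have hNn := N_nonneg N hN_add hN_smul hN_def
  set g : ℝ := frobInner (grad X) D with hg
  set c : ℝ := η / (L * M ^ 2) * g with hc
  have key := descent_lemma N hN_add hN_smul hN_def f grad Df hDf hDf_grad L hL hLip
    X (-(c • D))
  rw [← sub_eq_add_neg] at key
  have hfrob : frobInner (grad X) (-(c • D)) = -(c * g) := by
    rw [← neg_smul, frobInner_comm, frobInner_smul_left, frobInner_comm]
    ring
  have hNbound : N (-(c • D)) ≤ |c| * M := by
    rw [← neg_smul, hN_smul, abs_neg]
    exact mul_le_mul_of_nonneg_left hD (abs_nonneg c)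
  have hsq : (N (-(c • D))) ^ 2 ≤ c ^ 2 * M ^ 2 := by
    have h1 : (N (-(c • D))) ^ 2 ≤ (|c| * M) ^ 2 := by
      apply pow_le_pow_left₀ (hNn _) hNbound
    calc (N (-(c • D))) ^ 2 ≤ (|c| * M) ^ 2 := h1
      _ = c ^ 2 * M ^ 2 := by rw [mul_pow, sq_abs]
  have hLM : (0:ℝ) < L * M ^ 2 := by positivity
  have hL2 : (0:ℝ) ≤ L / 2 := by positivity
  have hquad : L / 2 * (N (-(c • D))) ^ 2 ≤ L / 2 * (c ^ 2 * M ^ 2) :=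
    mul_le_mul_of_nonneg_left hsq hL2
  have heq : -(c * g) + L / 2 * (c ^ 2 * M ^ 2) = -(η * (1 - η / 2) / (L * M ^ 2) * g ^ 2) := by
    rw [hc]
    field_simp
    ring
  rw [hfrob] at key
  linarith
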